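/- Let g₂₀₀ > 0, g₀₁₁ > 0, a ∈ ℝ, ε > 0, and σ ∈ {+1, −1}. Define z₀ := σ √(g₀₁₁ / g₂₀₀) ε, β₁ := −2σ √(g₀₁₁ g₂₀₀) ε, and β₂ := −σ a √(g₀₁₁ / g₂₀₀) ε, and let F₁(z₀, ρ) := β₁ z₀ + g₂₀₀ z₀² + g₀₁₁ ρ² and F₂(z₀, ρ) := ρ(β₂ + a z₀). Then F₁(z₀, ε) = 0, F₂(z₀, ε) = 0; moreover both diagonal entries of the Jacobian of (F₁, F₂) at (z₀, ε) vanish, namely β₁ + 2 g₂₀₀ z₀ = 0 and β₂ + a z₀ = 0, so the trace of the Jacobian is zero, and its determinant equals −2 a g₀₁₁ ε². -/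

import Mathlib

/-- Neimark–Sacker predictors at a transcritical-Hopf point:
with `z₀ = σ√(g₀₁₁/g₂₀₀)ε`, `β₁ = −2σ√(g₀₁₁g₂₀₀)ε`, `β₂ = −σa√(g₀₁₁/g₂₀₀)ε`,
the point `(z₀, ε)` is an equilibrium of the quadratic amplitude system, both
diagonal entries `β₁ + 2g₂₀₀z₀` and `β₂ + az₀` of the Jacobian vanish (so its
trace is zero), and its determinant equals `−2ag₀₁₁ε²`. -/
theorem transcriticalHopf_NS_predictor
    (g₂₀₀ g₀₁₁ a ε σ : ℝ)
    (hg₂₀₀ : 0 < g₂₀₀) (hg₀₁₁ : 0 < g₀₁₁) (hε : 0 < ε)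
    (hσ : σ = 1 ∨ σ = -1)
    (z₀ β₁ β₂ : ℝ)
    (hz₀ : z₀ = σ * Real.sqrt (g₀₁₁ / g₂₀₀) * ε)
    (hβ₁ : β₁ = -2 * σ * Real.sqrt (g₀₁₁ * g₂₀₀) * ε)
    (hβ₂ : β₂ = -σ * a * Real.sqrt (g₀₁₁ / g₂₀₀) * ε)
    (F₁ F₂ : ℝ → ℝ → ℝ)
    (hF₁ : ∀ z ρ : ℝ, F₁ z ρ = β₁ * z + g₂₀₀ * z ^ 2 + g₀₁₁ * ρ ^ 2)
    (hF₂ : ∀ z ρ : ℝ, F₂ z ρ = ρ * (β₂ + a * z)) :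
    F₁ z₀ ε = 0 ∧
    F₂ z₀ ε = 0 ∧
    β₁ + 2 * g₂₀₀ * z₀ = 0 ∧
    β₂ + a * z₀ = 0 ∧
    deriv (fun z => F₁ z ε) z₀ + deriv (fun ρ => F₂ z₀ ρ) ε = 0 ∧
    Matrix.det
      !![deriv (fun z => F₁ z ε) z₀, deriv (fun ρ => F₁ z₀ ρ) ε;
         deriv (fun z => F₂ z ε) z₀, deriv (fun ρ => F₂ z₀ ρ) ε]
      = -2 * a * g₀₁₁ * ε ^ 2 := by
  set s := Real.sqrt (g₀₁₁ / g₂₀₀) with hs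
  have hs0 : 0 ≤ s := Real.sqrt_nonneg _
  have hs2 : s ^ 2 = g₀₁₁ / g₂₀₀ := Real.sq_sqrt (by positivity)
  have hsqrt : Real.sqrt (g₀₁₁ * g₂₀₀) = s * g₂₀₀ := by
    rw [show g₀₁₁ * g₂₀₀ = (g₀₁₁ / g₂₀₀) * g₂₀₀ ^ 2 by field_simp,
      Real.sqrt_mul (by positivity), Real.sqrt_sq hg₂₀₀.le]
  have hσ2 : σ ^ 2 = 1 := by rcases hσ with h | h <;> simp [h]
  -- diagonal entries
  have hd1 : β₁ + 2 * g₂₀₀ * z₀ = 0 := by rw [hβ₁, hz₀, hsqrt]; ring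
  have hd2 : β₂ + a * z₀ = 0 := by rw [hβ₂, hz₀]; ring
  -- equilibrium
  have he1 : F₁ z₀ ε = 0 := by
    rw [hF₁, hβ₁, hz₀, hsqrt]
    have : g₂₀₀ * s ^ 2 = g₀₁₁ := by rw [hs2]; field_simp
    linear_combination (-σ^2 * ε^2) * this + (-g₀₁₁ * ε^2) * hσ2
  have he2 : F₂ z₀ ε = 0 := by rw [hF₂]; rw [hβ₂, hz₀] at hd2 ⊢; nlinarith [hd2]
  -- derivatives
  have dF1z : deriv (fun z => F₁ z ε) z₀ = β₁ + 2 * g₂₀₀ * z₀ := by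
    have : (fun z => F₁ z ε) = fun z => β₁ * z + g₂₀₀ * z ^ 2 + g₀₁₁ * ε ^ 2 := by
      funext z; rw [hF₁]
    rw [this]
    have h : HasDerivAt (fun z : ℝ => β₁ * z + g₂₀₀ * z ^ 2 + g₀₁₁ * ε ^ 2)
        (β₁ + 2 * g₂₀₀ * z₀) z₀ := by
      have h1 : HasDerivAt (fun z : ℝ => β₁ * z) β₁ z₀ := by
        simpa using (hasDerivAt_id z₀).const_mul β₁
      have h2 : HasDerivAt (fun z : ℝ => g₂₀₀ * z ^ 2) (g₂₀₀ * (2 * z₀)) z₀ := by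
        simpa using ((hasDerivAt_pow 2 z₀).const_mul g₂₀₀)
      have := (h1.add h2).add_const (g₀₁₁ * ε ^ 2)
      exact this.congr_deriv (by ring)
    exact h.deriv
  have dF1r : deriv (fun ρ => F₁ z₀ ρ) ε = 2 * g₀₁₁ * ε := by
    have : (fun ρ => F₁ z₀ ρ) = fun ρ => β₁ * z₀ + g₂₀₀ * z₀ ^ 2 + g₀₁₁ * ρ ^ 2 := by
      funext ρ; rw [hF₁]
    rw [this]
    have h : HasDerivAt (fun ρ : ℝ => β₁ * z₀ + g₂₀₀ * z₀ ^ 2 + g₀₁₁ * ρ ^ 2)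
        (2 * g₀₁₁ * ε) ε := by
      have h2 : HasDerivAt (fun ρ : ℝ => g₀₁₁ * ρ ^ 2) (g₀₁₁ * (2 * ε)) ε := by
        simpa using ((hasDerivAt_pow 2 ε).const_mul g₀₁₁)
      have := h2.const_add (β₁ * z₀ + g₂₀₀ * z₀ ^ 2)
      exact this.congr_deriv (by ring)
    exact h.deriv
  have dF2z : deriv (fun z => F₂ z ε) z₀ = ε * a := by
    have : (fun z => F₂ z ε) = fun z => ε * (β₂ + a * z) := by funext z; rw [hF₂]
    rw [this]
    have h : HasDerivAt (fun z : ℝ => ε * (β₂ + a * z)) (ε * a) z₀ := by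
      have h1 : HasDerivAt (fun z : ℝ => a * z) a z₀ := by
        simpa using (hasDerivAt_id z₀).const_mul a
      simpa using (h1.const_add β₂).const_mul ε
    exact h.deriv
  have dF2r : deriv (fun ρ => F₂ z₀ ρ) ε = β₂ + a * z₀ := by
    have : (fun ρ => F₂ z₀ ρ) = fun ρ => ρ * (β₂ + a * z₀) := by funext ρ; rw [hF₂]
    rw [this]
    have h : HasDerivAt (fun ρ : ℝ => ρ * (β₂ + a * z₀)) (β₂ + a * z₀) ε := by
      simpa using (hasDerivAt_id ε).mul_const (β₂ + a * z₀)
    exact h.deriv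
  refine ⟨he1, he2, hd1, hd2, ?_, ?_⟩
  · rw [dF1z, dF2r, hd1, hd2]; ring
  · rw [Matrix.det_fin_two_of, dF1z, dF1r, dF2z, dF2r, hd1, hd2]; ring
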